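/- Let A be the adjacency matrix of a graph G on n vertices with distinct eigenvalues λ_1,…,λ_n, orthonormal eigenvectors u_1,…,u_n, and suppose Gal(φ_A) ≥ A_n. Let v_1,…,v_k be vertices with radii r_1,…,r_k ≥ 1, Σ r_i = s, such that d(v_i, v_j) > r_i + r_j for all i ≠ j, and let S ⊆ [n] with |S| = s. Then the s×s generalized sampling matrix G(S, W, r_1,…,r_k), whose rows are (λ_{j}^{m} u_{j}(v_i))_{j∈S} for 0 ≤ m ≤ r_i − 1, is invertible. -/

import Mathlib

open Matrix Finset

section Helpers
variable {n : ℕ}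

private lemma sum_sq_zero {α : Type*} [Fintype α] {f : α → ℝ}
    (h : ∑ t, f t * f t = 0) (t : α) : f t = 0 :=
  mul_self_eq_zero.mp
    ((Finset.sum_eq_zero_iff_of_nonneg (fun i _ => mul_self_nonneg (f i))).mp h t (mem_univ t))

private lemma conj_diag_apply (U : Matrix (Fin n) (Fin n) ℝ) (f : Fin n → ℝ) (a b : Fin n) :
    (U * Matrix.diagonal f * Uᵀ) a b = ∑ t, f t * (U a t * U b t) := by
  rw [Matrix.mul_apply]
  refine Finset.sum_congr rfl fun t _ => ?_
  rw [Matrix.mul_diagonal, Matrix.transpose_apply]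
  ring

private lemma conj_eq {U A : Matrix (Fin n) (Fin n) ℝ} {lam : Fin n → ℝ}
    (hU' : U * Uᵀ = 1) (hA : A * U = U * Matrix.diagonal lam) :
    A = U * Matrix.diagonal lam * Uᵀ := by
  calc A = A * (U * Uᵀ) := by rw [hU', Matrix.mul_one]
  _ = (A * U) * Uᵀ := by rw [Matrix.mul_assoc]
  _ = U * Matrix.diagonal lam * Uᵀ := by rw [hA]

private lemma spec_apply {U A : Matrix (Fin n) (Fin n) ℝ} {lam : Fin n → ℝ}
    (hU : Uᵀ * U = 1) (hA : A * U = U * Matrix.diagonal lam) (p : ℕ) (a b : Fin n) :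
    (A ^ p) a b = ∑ t, lam t ^ p * (U a t * U b t) := by
  have hU' : U * Uᵀ = 1 := mul_eq_one_comm.mp hU
  have hAe : A ^ p = U * Matrix.diagonal (fun t => lam t ^ p) * Uᵀ := by
    induction p with
    | zero =>
      simp only [pow_zero]
      rw [show Matrix.diagonal (fun _ : Fin n => (1:ℝ)) = 1 from Matrix.diagonal_one]
      rw [Matrix.mul_one, hU']
    | succ q ih =>
      rw [pow_succ, ih, conj_eq hU' hA]
      calc (U * Matrix.diagonal (fun t => lam t ^ q) * Uᵀ) * (U * Matrix.diagonal lam * Uᵀ)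
          = U * (Matrix.diagonal (fun t => lam t ^ q) * ((Uᵀ * U) * Matrix.diagonal lam)) * Uᵀ := by
            simp only [Matrix.mul_assoc]
      _ = U * Matrix.diagonal (fun t => lam t ^ (q+1)) * Uᵀ := by
            rw [hU, Matrix.one_mul, Matrix.diagonal_mul_diagonal]
            simp only [Matrix.mul_assoc, ← pow_succ]
  rw [hAe, conj_diag_apply]

private lemma adj_apply {U A : Matrix (Fin n) (Fin n) ℝ} {lam : Fin n → ℝ}
    (hU : Uᵀ * U = 1) (hA : A * U = U * Matrix.diagonal lam) (t0 a b : Fin n) :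
    Matrix.adjugate (lam t0 • (1 : Matrix (Fin n) (Fin n) ℝ) - A) a b
      = (∏ j ∈ Finset.univ.erase t0, (lam t0 - lam j)) * (U a t0 * U b t0) := by
  have hU' : U * Uᵀ = 1 := mul_eq_one_comm.mp hU
  have hdet : U.det * U.det = 1 := by
    have := congrArg Matrix.det hU
    rwa [Matrix.det_mul, Matrix.det_transpose, Matrix.det_one] at this
  have hadjU : Matrix.adjugate U = U.det • Uᵀ := by
    calc Matrix.adjugate U = (Uᵀ * U) * Matrix.adjugate U := by rw [hU, Matrix.one_mul]
    _ = Uᵀ * (U * Matrix.adjugate U) := by rw [Matrix.mul_assoc]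
    _ = Uᵀ * (U.det • 1) := by rw [Matrix.mul_adjugate]
    _ = U.det • Uᵀ := by rw [Matrix.mul_smul, Matrix.mul_one]
  have hadjUT : Matrix.adjugate Uᵀ = U.det • U := by
    calc Matrix.adjugate Uᵀ = (U * Uᵀ) * Matrix.adjugate Uᵀ := by rw [hU', Matrix.one_mul]
    _ = U * (Uᵀ * Matrix.adjugate Uᵀ) := by rw [Matrix.mul_assoc]
    _ = U * (Uᵀ.det • 1) := by rw [Matrix.mul_adjugate]
    _ = U.det • U := by rw [Matrix.mul_smul, Matrix.mul_one, Matrix.det_transpose]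
  have hshift : lam t0 • (1 : Matrix (Fin n) (Fin n) ℝ) - A
      = (U * Matrix.diagonal (fun j => lam t0 - lam j)) * Uᵀ := by
    have h1 : lam t0 • (1 : Matrix (Fin n) (Fin n) ℝ) = U * (lam t0 • 1) * Uᵀ := by
      rw [Matrix.mul_smul, Matrix.mul_one, Matrix.smul_mul, hU']
    calc lam t0 • (1 : Matrix (Fin n) (Fin n) ℝ) - A
        = U * (lam t0 • 1) * Uᵀ - U * Matrix.diagonal lam * Uᵀ := by
          rw [← h1, ← conj_eq hU' hA]
    _ = (U * (lam t0 • 1 - Matrix.diagonal lam)) * Uᵀ := by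
          rw [Matrix.mul_sub, Matrix.sub_mul]
    _ = (U * Matrix.diagonal (fun j => lam t0 - lam j)) * Uᵀ := by
          rw [Matrix.smul_one_eq_diagonal, Matrix.diagonal_sub]
  rw [hshift, Matrix.adjugate_mul_distrib, Matrix.adjugate_mul_distrib, hadjU, hadjUT,
    Matrix.adjugate_diagonal]
  have hexp : (U.det • U) * (Matrix.adjugate (Matrix.diagonal fun j => lam t0 - lam j) * (U.det • Uᵀ))
    = U * Matrix.adjugate (Matrix.diagonal fun j => lam t0 - lam j) * Uᵀ := by
    simp only [smul_mul_assoc, mul_smul_comm, smul_smul]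
    rw [hdet, one_smul, ← Matrix.mul_assoc]
  rw [← Matrix.adjugate_diagonal, hexp, Matrix.adjugate_diagonal, conj_diag_apply]
  rw [Finset.sum_eq_single t0]
  · intro t _ htt
    have ht0 : t0 ∈ Finset.univ.erase t := Finset.mem_erase.mpr ⟨fun h => htt h.symm, mem_univ _⟩
    rw [Finset.prod_eq_zero ht0 (by rw [sub_self]), zero_mul]
  · intro h; exact absurd (mem_univ t0) h
end Helpers
section Mu
variable {n : ℕ}

noncomputable def muMat (G : SimpleGraph (Fin n)) [DecidableRel G.Adj]
    {L : Type*} [Field L] (lamL : Fin n → L) (t : Fin n) : Matrix (Fin n) (Fin n) L :=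
  (∏ j ∈ Finset.univ.erase t, (lamL t - lamL j))⁻¹ •
    Matrix.adjugate (lamL t • (1 : Matrix (Fin n) (Fin n) L) - G.adjMatrix L)

private lemma map_shift (G : SimpleGraph (Fin n)) [DecidableRel G.Adj]
    {L R' : Type*} [CommRing L] [CommRing R'] (f : L →+* R') (x : L) :
    ((x • (1 : Matrix (Fin n) (Fin n) L) - G.adjMatrix L).map f)
      = f x • (1 : Matrix (Fin n) (Fin n) R') - G.adjMatrix R' := by
  ext a b
  simp only [Matrix.map_apply, Matrix.sub_apply, Matrix.smul_apply, Matrix.one_apply,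
    SimpleGraph.adjMatrix_apply, smul_eq_mul]
  rw [_root_.map_sub, _root_.map_mul, apply_ite f, apply_ite f, _root_.map_one, _root_.map_zero]

private lemma map_adj_entry (G : SimpleGraph (Fin n)) [DecidableRel G.Adj]
    {L R' : Type*} [CommRing L] [CommRing R'] (f : L →+* R') (x : L) (a b : Fin n) :
    f (Matrix.adjugate (x • (1 : Matrix (Fin n) (Fin n) L) - G.adjMatrix L) a b)
      = Matrix.adjugate (f x • (1 : Matrix (Fin n) (Fin n) R') - G.adjMatrix R') a b := by
  have h := f.map_adjugate (x • (1 : Matrix (Fin n) (Fin n) L) - G.adjMatrix L)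
  have h2 : f.mapMatrix (x • (1 : Matrix (Fin n) (Fin n) L) - G.adjMatrix L)
      = f x • (1 : Matrix (Fin n) (Fin n) R') - G.adjMatrix R' := map_shift G f x
  calc f (Matrix.adjugate (x • (1 : Matrix (Fin n) (Fin n) L) - G.adjMatrix L) a b)
      = (f.mapMatrix (Matrix.adjugate (x • (1 : Matrix (Fin n) (Fin n) L) - G.adjMatrix L))) a b :=
        rfl
  _ = (Matrix.adjugate (f.mapMatrix (x • (1 : Matrix (Fin n) (Fin n) L) - G.adjMatrix L))) a b := by
        rw [h]
  _ = _ := by rw [h2]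

private lemma mu_iota (G : SimpleGraph (Fin n)) [DecidableRel G.Adj]
    (lam : Fin n → ℝ) (U : Matrix (Fin n) (Fin n) ℝ)
    (hdist : Function.Injective lam) (hU : Uᵀ * U = 1)
    (hA : G.adjMatrix ℝ * U = U * Matrix.diagonal lam)
    {L : Type*} [Field L] (lamL : Fin n → L) (ι : L →+* ℝ)
    (hι : ∀ i, ι (lamL i) = lam i) (t a b : Fin n) :
    ι (muMat G lamL t a b) = U a t * U b t := by
  have hc : ι (∏ j ∈ Finset.univ.erase t, (lamL t - lamL j))
      = ∏ j ∈ Finset.univ.erase t, (lam t - lam j) := by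
    rw [map_prod]
    exact Finset.prod_congr rfl fun j _ => by rw [map_sub, hι, hι]
  have hcne : (∏ j ∈ Finset.univ.erase t, (lam t - lam j)) ≠ 0 := by
    refine Finset.prod_ne_zero_iff.mpr fun j hj => sub_ne_zero.mpr fun h => ?_
    exact (Finset.mem_erase.mp hj).1 (hdist h).symm
  have hmap : ι (Matrix.adjugate (lamL t • (1 : Matrix (Fin n) (Fin n) L) - G.adjMatrix L) a b)
      = (∏ j ∈ Finset.univ.erase t, (lam t - lam j)) * (U a t * U b t) := by
    rw [map_adj_entry, hι]
    exact adj_apply hU hA t a b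
  simp only [muMat, Matrix.smul_apply, smul_eq_mul, _root_.map_mul, map_inv₀, hc, hmap]
  rw [inv_mul_cancel_left₀ hcne]

private lemma mu_gal (G : SimpleGraph (Fin n)) [DecidableRel G.Adj]
    {L : Type*} [Field L] [Algebra ℚ L] (lamL : Fin n → L)
    (σ : Equiv.Perm (Fin n)) (g : L ≃ₐ[ℚ] L)
    (hg : ∀ i, g (lamL i) = lamL (σ i)) (t a b : Fin n) :
    g (muMat G lamL t a b) = muMat G lamL (σ t) a b := by
  have hc : g (∏ j ∈ Finset.univ.erase t, (lamL t - lamL j))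
      = ∏ j ∈ Finset.univ.erase (σ t), (lamL (σ t) - lamL j) := by
    rw [map_prod]
    have himg : (Finset.univ.erase t).image σ = Finset.univ.erase (σ t) := by
      ext x
      simp only [Finset.mem_image, Finset.mem_erase, Finset.mem_univ, and_true]
      constructor
      · rintro ⟨y, hy, rfl⟩
        exact fun h => hy (σ.injective h)
      · intro hx
        refine ⟨σ.symm x, fun h => hx ?_, σ.apply_symm_apply x⟩
        rw [← σ.apply_symm_apply x, h]
    rw [← himg, Finset.prod_image (fun x _ y _ h => σ.injective h)]
    exact Finset.prod_congr rfl fun j _ => by rw [map_sub, hg, hg]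
  have hadj : g (Matrix.adjugate (lamL t • (1 : Matrix (Fin n) (Fin n) L) - G.adjMatrix L) a b)
      = Matrix.adjugate (lamL (σ t) • (1 : Matrix (Fin n) (Fin n) L) - G.adjMatrix L) a b := by
    have := map_adj_entry G ((g : L ≃+* L) : L →+* L) (lamL t) a b
    rw [show (((g : L ≃+* L) : L →+* L) (lamL t)) = lamL (σ t) from hg t] at this
    exact this
  simp only [muMat, Matrix.smul_apply, smul_eq_mul, _root_.map_mul, map_inv₀]
  rw [hc]
  rw [show g (Matrix.adjugate (lamL t • (1 : Matrix (Fin n) (Fin n) L) - G.adjMatrix L) a b)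
    = _ from hadj]
end Mu
section NZ
variable {n : ℕ}

private lemma fin_two_cases : ∀ (x y z : Fin 2), y ≠ z → x = y ∨ x = z := by decide

private lemma entries_ne_zero (G : SimpleGraph (Fin n)) [DecidableRel G.Adj]
    (lam : Fin n → ℝ) (U : Matrix (Fin n) (Fin n) ℝ)
    (hdist : Function.Injective lam) (hU : Uᵀ * U = 1)
    (hA : G.adjMatrix ℝ * U = U * Matrix.diagonal lam)
    {L : Type*} [Field L] [Algebra ℚ L] (lamL : Fin n → L) (ι : L →+* ℝ)
    (hι : ∀ i, ι (lamL i) = lam i)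
    (hGal : ∀ σ : Equiv.Perm (Fin n), σ ∈ alternatingGroup (Fin n) →
      ∃ g : L ≃ₐ[ℚ] L, ∀ i, g (lamL i) = lamL (σ i))
    (a t : Fin n) : U a t ≠ 0 := by
  intro h0
  have hU' : U * Uᵀ = 1 := mul_eq_one_comm.mp hU
  have hrow : ∑ τ, U a τ * U a τ = 1 := by
    have h1 := congrFun (congrFun hU' a) a
    simp only [Matrix.mul_apply, Matrix.transpose_apply, Matrix.one_apply_eq] at h1
    exact h1
  have hex : ¬ (∀ τ, U a τ = 0) := by
    intro hall
    rw [Finset.sum_congr rfl (fun τ _ => by rw [hall τ, mul_zero])] at hrow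
    simp at hrow
  rcases lt_or_ge n 3 with hn | hn
  · interval_cases n
    · exact t.elim0
    · exact hex fun τ => by rwa [Subsingleton.elim τ t]
    · -- n = 2
      obtain ⟨t', ht'⟩ := exists_ne t
      obtain ⟨a', ha'⟩ := exists_ne a
      have hunivt : (Finset.univ : Finset (Fin 2)) = {t, t'} := by
        refine (Finset.eq_univ_iff_forall.mpr fun x => ?_).symm
        rcases fin_two_cases x t t' ht'.symm with h | h <;> simp [h]
      have hantiva : (Finset.univ : Finset (Fin 2)) = {a, a'} := by
        refine (Finset.eq_univ_iff_forall.mpr fun x => ?_).symm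
        rcases fin_two_cases x a a' ha'.symm with h | h <;> simp [h]
      have hsumt : ∀ f : Fin 2 → ℝ, ∑ τ, f τ = f t + f t' := fun f => by
        rw [hunivt, Finset.sum_pair (Ne.symm ht')]
      have hsuma : ∀ f : Fin 2 → ℝ, ∑ x, f x = f a + f a' := fun f => by
        rw [hantiva, Finset.sum_pair (Ne.symm ha')]
      -- row a: U a t' ≠ 0
      rw [hsumt (fun τ => U a τ * U a τ), h0, mul_zero, zero_add] at hrow
      have hat' : U a t' ≠ 0 := fun h => by rw [h, mul_zero] at hrow; exact one_ne_zero hrow.symm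
      -- column t: U a' t ≠ 0
      have hcolt : ∑ x, U x t * U x t = 1 := by
        have h1 := congrFun (congrFun hU t) t
        simp only [Matrix.mul_apply, Matrix.transpose_apply, Matrix.one_apply_eq] at h1
        exact h1
      rw [hsuma (fun x => U x t * U x t), h0, mul_zero, zero_add] at hcolt
      have ha't : U a' t ≠ 0 := fun h => by rw [h, mul_zero] at hcolt; exact one_ne_zero hcolt.symm
      -- orthogonality of columns t and t' : U a' t' = 0
      have horth : ∑ x, U x t * U x t' = 0 := by
        have h1 := congrFun (congrFun hU t) t'
        simp only [Matrix.mul_apply, Matrix.transpose_apply] at h1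
        rwa [Matrix.one_apply_ne ht'.symm] at h1
      rw [hsuma (fun x => U x t * U x t'), h0, zero_mul, zero_add] at horth
      have ha't' : U a' t' = 0 := by
        rcases mul_eq_zero.mp horth with h | h
        · exact absurd h ha't
        · exact h
      -- adjacency diagonal is zero
      have hdiag : ∀ x : Fin 2, G.adjMatrix ℝ x x = 0 := fun x => by
        simp [SimpleGraph.adjMatrix_apply]
      -- compute (A*U) entries
      have hAU : ∀ x y : Fin 2, G.adjMatrix ℝ x a * U a y + G.adjMatrix ℝ x a' * U a' y
          = U x y * lam y := by
        intro x y
        have h1 := congrFun (congrFun hA x) y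
        rw [Matrix.mul_apply, Matrix.mul_diagonal] at h1
        rw [← hsuma (fun z => G.adjMatrix ℝ x z * U z y)]
        exact h1
      -- A a' a = 0 : use entry (a', t') : A a' a * U a t' + A a' a' * U a' t' = U a' t' * lam t' = 0
      have hAa'a : G.adjMatrix ℝ a' a = 0 := by
        have h1 := hAU a' t'
        rw [ha't', hdiag a'] at h1
        simp only [mul_zero, zero_mul, add_zero] at h1
        rcases mul_eq_zero.mp h1 with h | h
        · exact h
        · exact absurd h hat'
      -- A a a' = 0 : entry (a, t) : A a a * U a t + A a a' * U a' t = U a t * lam t = 0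
      have hAaa' : G.adjMatrix ℝ a a' = 0 := by
        have h1 := hAU a t
        rw [h0, hdiag a] at h1
        simp only [mul_zero, zero_mul, zero_add] at h1
        rcases mul_eq_zero.mp h1 with h | h
        · exact h
        · exact absurd h ha't
      -- entry (a, t') : A a a * U a t' + A a a' * U a' t' = U a t' * lam t'  ⇒ lam t' = 0
      have hlt' : lam t' = 0 := by
        have h1 := hAU a t'
        rw [hdiag a, hAaa'] at h1
        simp only [mul_zero, zero_mul, add_zero] at h1
        rcases mul_eq_zero.mp h1.symm with h | h
        · exact absurd h hat'
        · exact h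
      -- entry (a', t) : A a' a * U a t + A a' a' * U a' t = U a' t * lam t ⇒ lam t = 0
      have hlt : lam t = 0 := by
        have h1 := hAU a' t
        rw [hdiag a', hAa'a] at h1
        simp only [mul_zero, zero_mul, add_zero] at h1
        rcases mul_eq_zero.mp h1.symm with h | h
        · exact absurd h ha't
        · exact h
      exact ht' (hdist (by rw [hlt, hlt']))
  · -- n ≥ 3 : Galois orbit argument
    apply hex
    intro τ
    by_cases htτ : τ = t
    · rwa [htτ]
    have hμ0 : muMat G lamL t a a = 0 := by
      have h1 : ι (muMat G lamL t a a) = 0 := by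
        rw [mu_iota G lam U hdist hU hA lamL ι hι, h0, mul_zero]
      by_contra h2
      exact h2 (ι.injective (by rwa [map_zero]))
    -- find an even permutation sending t to τ
    have hcompl : (({t, τ} : Finset (Fin n))ᶜ).Nonempty := by
      rw [← Finset.card_pos, Finset.card_compl]
      have hle : ({t, τ} : Finset (Fin n)).card ≤ 2 :=
        le_trans (Finset.card_insert_le _ _) (by simp)
      have : Fintype.card (Fin n) = n := Fintype.card_fin n
      omega
    obtain ⟨u, hu⟩ := hcompl
    rw [Finset.mem_compl, Finset.mem_insert, not_or, Finset.mem_singleton] at hu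
    set σ : Equiv.Perm (Fin n) := Equiv.swap t τ * Equiv.swap τ u with hσdef
    have hσt : σ t = τ := by
      rw [hσdef]
      simp only [Equiv.Perm.mul_apply]
      rw [Equiv.swap_apply_of_ne_of_ne (fun h => htτ h.symm) (fun h => hu.1 h.symm),
        Equiv.swap_apply_left]
    have hσalt : σ ∈ alternatingGroup (Fin n) := by
      rw [Equiv.Perm.mem_alternatingGroup, hσdef, _root_.map_mul,
        Equiv.Perm.sign_swap (fun h => htτ h.symm), Equiv.Perm.sign_swap (fun h => hu.2 h.symm)]
      decide
    obtain ⟨g, hg⟩ := hGal σ hσalt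
    have hμτ : muMat G lamL τ a a = 0 := by
      have h1 := mu_gal G lamL σ g hg t a a
      rw [hμ0, map_zero, hσt] at h1
      exact h1.symm
    have h2 := mu_iota G lam U hdist hU hA lamL ι hι τ a a
    rw [hμτ, map_zero] at h2
    exact mul_self_eq_zero.mp h2.symm
end NZ
section Perm
variable {n : ℕ}

private lemma swap_pres_image {α : Type*} [DecidableEq α] {T : Finset α} {x y : α}
    (hx : x ∈ T) (hy : y ∈ T) (z : α) : Equiv.swap x y z ∈ T ↔ z ∈ T := by
  rcases eq_or_ne z x with rfl | hzx
  · rw [Equiv.swap_apply_left]; exact ⟨fun _ => hx, fun _ => hy⟩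
  rcases eq_or_ne z y with rfl | hzy
  · rw [Equiv.swap_apply_right]; exact ⟨fun _ => hy, fun _ => hx⟩
  · rw [Equiv.swap_apply_of_ne_of_ne hzx hzy]

private lemma swap_pres_image' {α : Type*} [DecidableEq α] {T : Finset α} {x y : α}
    (hx : x ∉ T) (hy : y ∉ T) (z : α) : Equiv.swap x y z ∈ T ↔ z ∈ T := by
  rcases eq_or_ne z x with rfl | hzx
  · rw [Equiv.swap_apply_left]
    exact ⟨fun h => absurd h hy, fun h => absurd h hx⟩
  rcases eq_or_ne z y with rfl | hzy
  · rw [Equiv.swap_apply_right]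
    exact ⟨fun h => absurd h hx, fun h => absurd h hy⟩
  · rw [Equiv.swap_apply_of_ne_of_ne hzx hzy]

private lemma exists_even_perm_image (T₀ T₁ : Finset (Fin n)) (hcard : T₀.card = T₁.card)
    (hbig : 2 ≤ T₁.card ∨ T₁.card + 2 ≤ n) :
    ∃ σ : Equiv.Perm (Fin n), σ ∈ alternatingGroup (Fin n) ∧ ∀ x, σ x ∈ T₁ ↔ x ∈ T₀ := by
  classical
  have hccard : T₀ᶜ.card = T₁ᶜ.card := by
    rw [Finset.card_compl, Finset.card_compl, hcard]
  let e₁ : {x // x ∈ T₀} ≃ {x // x ∈ T₁} := Finset.equivOfCardEq hcard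
  let e₂' : {x // x ∈ T₀ᶜ} ≃ {x // x ∈ T₁ᶜ} := Finset.equivOfCardEq hccard
  let f₀ : {x // ¬ x ∈ T₀} ≃ {x // x ∈ T₀ᶜ} := Equiv.subtypeEquivRight (by simp)
  let f₁ : {x // x ∈ T₁ᶜ} ≃ {x // ¬ x ∈ T₁} := Equiv.subtypeEquivRight (by simp)
  let π : Equiv.Perm (Fin n) :=
    ((Equiv.sumCompl (· ∈ T₀)).symm.trans
      ((Equiv.sumCongr e₁ (f₀.trans (e₂'.trans f₁))).trans (Equiv.sumCompl (· ∈ T₁))))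
  have hπ : ∀ x, π x ∈ T₁ ↔ x ∈ T₀ := by
    intro x
    by_cases hx : x ∈ T₀
    · have : π x = (e₁ ⟨x, hx⟩ : Fin n) := by
        simp only [π, Equiv.trans_apply, Equiv.sumCompl_symm_apply_of_pos hx,
          Equiv.sumCongr_apply, Sum.map_inl, Equiv.sumCompl_apply_inl]
      rw [this]
      exact iff_of_true (by simpa using (e₁ ⟨x, hx⟩).2) hx
    · have : π x = ((f₁ (e₂' (f₀ ⟨x, hx⟩))) : Fin n) := by
        simp only [π, Equiv.trans_apply, Equiv.sumCompl_symm_apply_of_neg hx,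
          Equiv.sumCongr_apply, Sum.map_inr, Equiv.sumCompl_apply_inr]
      rw [this]
      constructor
      · intro h; exact absurd h (f₁ (e₂' (f₀ ⟨x, hx⟩))).2
      · intro h; exact absurd h hx
  by_cases hsign : Equiv.Perm.sign π = 1
  · exact ⟨π, Equiv.Perm.mem_alternatingGroup.mpr hsign, hπ⟩
  · have hsign' : Equiv.Perm.sign π = -1 := by
      rcases Int.units_eq_one_or (Equiv.Perm.sign π) with h | h
      · exact absurd h hsign
      · exact h
    rcases hbig with hb | hb
    · obtain ⟨x, hx, y, hy, hxy⟩ := Finset.one_lt_card.mp hb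
      refine ⟨Equiv.swap x y * π, ?_, ?_⟩
      · rw [Equiv.Perm.mem_alternatingGroup, _root_.map_mul, Equiv.Perm.sign_swap hxy, hsign']
        decide
      · intro z
        rw [Equiv.Perm.mul_apply, swap_pres_image hx hy, hπ]
    · have hb2 : 2 ≤ T₁ᶜ.card := by
        rw [Finset.card_compl]
        have : Fintype.card (Fin n) = n := Fintype.card_fin n
        omega
      obtain ⟨x, hx, y, hy, hxy⟩ := Finset.one_lt_card.mp hb2
      rw [Finset.mem_compl] at hx hy
      refine ⟨Equiv.swap x y * π, ?_, ?_⟩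
      · rw [Equiv.Perm.mem_alternatingGroup, _root_.map_mul, Equiv.Perm.sign_swap hxy, hsign']
        decide
      · intro z
        rw [Equiv.Perm.mul_apply, swap_pres_image' hx hy, hπ]
end Perm
section ColSel

private lemma exists_unit_submatrix {s n : ℕ} (Y : Matrix (Fin s) (Fin n) ℝ)
    (h : LinearIndependent ℝ (fun a => Y a)) :
    ∃ T : Fin s → Fin n, Function.Injective T ∧ IsUnit (Y.submatrix id T) := by
  classical
  have hli := Fintype.linearIndependent_iff.mp h
  have hinj : Function.Injective Yᵀ.mulVecLin := by
    rw [← LinearMap.ker_eq_bot, LinearMap.ker_eq_bot']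
    intro c hc
    have hc' : ∀ t, ∑ a, c a * Y a t = 0 := by
      intro t
      have h1 := congrFun hc t
      simpa [Matrix.mulVecLin_apply, Matrix.mulVec, Matrix.vecMul, dotProduct,
        Matrix.transpose_apply] using h1
    funext a
    refine hli c ?_ a
    funext t
    simp only [Finset.sum_apply, Pi.smul_apply, smul_eq_mul, Pi.zero_apply]
    exact hc' t
  have hrankT : Yᵀ.rank = s := by
    rw [Matrix.rank, LinearMap.finrank_range_of_inj hinj, Module.finrank_pi, Fintype.card_fin]
  have hrank : Y.rank = s := by rw [← Matrix.rank_transpose]; exact hrankT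
  have hspan : Submodule.span ℝ (Set.range Yᵀ) = ⊤ := by
    apply Submodule.eq_top_of_finrank_eq
    have h1 : Y.rank = Module.finrank ℝ ↥(Submodule.span ℝ (Set.range Yᵀ)) := by
      rw [Matrix.rank, Matrix.range_mulVecLin]; rfl
    rw [← h1, hrank, Module.finrank_pi, Fintype.card_fin]
  obtain ⟨B, hBsub, hBspan, hBli⟩ := exists_linearIndependent ℝ (Set.range Yᵀ)
  rw [hspan] at hBspan
  have hBfin : B.Finite := hBli.setFinite
  have : Fintype B := hBfin.fintype
  have hcardB : Fintype.card B = s := by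
    have h1 := finrank_span_set_eq_card hBli
    rw [hBspan] at h1
    rw [← Set.toFinset_card]
    rw [finrank_top ℝ (Fin s → ℝ), Module.finrank_pi, Fintype.card_fin] at h1
    exact h1.symm
  let eB : Fin s ≃ B := (Fintype.equivFinOfCardEq hcardB).symm
  have hsel : ∀ x : B, ∃ t : Fin n, Yᵀ t = (x : Fin s → ℝ) := fun x => hBsub x.2
  choose T' hT' using hsel
  refine ⟨fun a => T' (eB a), ?_, ?_⟩
  · intro a a' hip
    have hip' : T' (eB a) = T' (eB a') := hip
    have h1 : ((eB a : _) : Fin s → ℝ) = ((eB a' : _) : Fin s → ℝ) := by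
      rw [← hT' (eB a), ← hT' (eB a'), hip']
    exact eB.injective (Subtype.ext h1)
  · rw [← Matrix.linearIndependent_cols_iff_isUnit]
    have h2 : (fun a => (Y.submatrix id fun a => T' (eB a))ᵀ a)
        = fun a => ((eB a : _) : Fin s → ℝ) := by
      funext a
      rw [← hT' (eB a)]
      rfl
    change LinearIndependent ℝ (fun a => (Y.submatrix id fun a => T' (eB a))ᵀ a)
    rw [h2]
    exact hBli.comp eB eB.injective
end ColSel
/-- For the adjacency matrix of a graph with distinct eigenvalues, orthonormal
eigenvectors and `Gal(φ_A) ≥ A_n`, the generalized sampling matrix `G(S, W, r_1, …, r_k)` built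
from vertices `v_i` with radii `r_i` satisfying `d(v_i, v_j) > r_i + r_j` has full rank `s`. -/
theorem stmt_16 {n k s : ℕ} (G : SimpleGraph (Fin n)) [DecidableRel G.Adj]
    (lam : Fin n → ℝ) (U : Matrix (Fin n) (Fin n) ℝ)
    (hdist : Function.Injective lam) (hU : U.transpose * U = 1)
    (heig : ∀ i, (G.adjMatrix ℝ).mulVec (fun v => U v i) = lam i • (fun v => U v i))
    {L : Type*} [Field L] [Algebra ℚ L] (lamL : Fin n → L) (ι : L →+* ℝ)
    (hι : ∀ i, ι (lamL i) = lam i)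
    (hroot : ∀ i, Polynomial.aeval (lamL i) ((G.adjMatrix ℚ).charpoly) = 0)
    (hGal : ∀ σ : Equiv.Perm (Fin n), σ ∈ alternatingGroup (Fin n) →
      ∃ g : L ≃ₐ[ℚ] L, ∀ i, g (lamL i) = lamL (σ i))
    (v : Fin k → Fin n) (r : Fin k → ℕ) (hr : ∀ i, 1 ≤ r i) (hsum : ∑ i, r i = s)
    (hdistance : ∀ i j, i ≠ j → ∀ p : G.Walk (v i) (v j), r i + r j < p.length)
    (S : Fin s → Fin n) (hS : Function.Injective S) :
    (Matrix.of fun (p : Σ i : Fin k, Fin (r i)) (j : Fin s) =>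
      lam (S j) ^ (p.2 : ℕ) * U (v p.1) (S j)).rank = s := by
  classical
  have hA : G.adjMatrix ℝ * U = U * Matrix.diagonal lam := by
    ext w i
    have h1 := congrFun (heig i) w
    simp only [Matrix.mulVec, dotProduct, Pi.smul_apply, smul_eq_mul] at h1
    rw [Matrix.mul_apply, Matrix.mul_diagonal]
    exact h1.trans (mul_comm _ _)
  have hvU : ∀ a t, U a t ≠ 0 := fun a t =>
    entries_ne_zero G lam U hdist hU hA lamL ι hι hGal a t
  have hsn : s ≤ n := by
    have := Fintype.card_le_of_injective S hS
    simpa using this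
  have hcardP : Fintype.card (Σ i : Fin k, Fin (r i)) = s := by
    rw [Fintype.card_sigma]
    simpa using hsum
  let e : (Σ i : Fin k, Fin (r i)) ≃ Fin s := Fintype.equivFinOfCardEq hcardP
  set M : Matrix (Σ i : Fin k, Fin (r i)) (Fin s) ℝ :=
    Matrix.of fun (p : Σ i : Fin k, Fin (r i)) (j : Fin s) =>
      lam (S j) ^ (p.2 : ℕ) * U (v p.1) (S j) with hM
  suffices hunit : IsUnit (M.submatrix (⇑e.symm) id) by
    have h0 : Function.Injective ((M.submatrix (⇑e.symm) id).mulVec) :=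
      Matrix.mulVec_injective_iff_isUnit.mpr hunit
    have hinjM : Function.Injective ⇑(M.mulVecLin) := by
      intro x y hxy
      apply h0
      funext j
      have hx : (M.submatrix (⇑e.symm) id).mulVec x j = M.mulVec x (e.symm j) := rfl
      have hy : (M.submatrix (⇑e.symm) id).mulVec y j = M.mulVec y (e.symm j) := rfl
      rw [hx, hy, show M.mulVec x = M.mulVec y from hxy]
    rw [Matrix.rank, LinearMap.finrank_range_of_inj hinjM, Module.finrank_pi, Fintype.card_fin]
  rcases Nat.lt_or_ge s 2 with hs2 | hs2
  · -- s = 0 or s = 1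
    rcases Nat.eq_zero_or_pos s with hs0 | hs1
    · subst hs0
      rw [Matrix.isUnit_iff_isUnit_det, Matrix.det_isEmpty]
      exact isUnit_one
    · have hs1' : s = 1 := by omega
      subst hs1'
      have hk0 : 0 < k := by
        by_contra hk
        push_neg at hk
        interval_cases k
        simp at hsum
      have hPsub : Subsingleton (Σ i : Fin k, Fin (r i)) :=
        Fintype.card_le_one_iff_subsingleton.mp (le_of_eq hcardP)
      rw [Matrix.isUnit_iff_isUnit_det, Matrix.det_fin_one]
      have hp0 : e.symm 0 = ⟨⟨0, hk0⟩, ⟨0, hr ⟨0, hk0⟩⟩⟩ := Subsingleton.elim _ _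
      rw [Matrix.submatrix_apply, hp0]
      show IsUnit (lam (S 0) ^ ((0 : ℕ)) * U (v ⟨0, hk0⟩) (S 0))
      rw [pow_zero, one_mul]
      exact isUnit_iff_ne_zero.mpr (hvU _ _)
  -- main case : 2 ≤ s
  set Z : (Σ i : Fin k, Fin (r i)) → Fin n → ℝ :=
    fun p t => lam t ^ (p.2 : ℕ) * U (v p.1) t with hZ
  have hZorth : ∀ p q : (Σ i : Fin k, Fin (r i)), p.1 ≠ q.1 → ∑ t, Z p t * Z q t = 0 := by
    intro p q hpq
    have h1 : ∑ t, Z p t * Z q t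
        = ((G.adjMatrix ℝ) ^ ((p.2 : ℕ) + (q.2 : ℕ))) (v p.1) (v q.1) := by
      rw [spec_apply hU hA]
      refine Finset.sum_congr rfl fun t _ => ?_
      simp only [hZ]
      rw [pow_add]; ring
    rw [h1, SimpleGraph.adjMatrix_pow_apply_eq_card_walk]
    have h2 : Fintype.card {w : G.Walk (v p.1) (v q.1) | w.length = (p.2 : ℕ) + (q.2 : ℕ)} = 0 := by
      rw [Fintype.card_eq_zero_iff]
      refine ⟨fun w => ?_⟩
      have hlen : (w : {w : G.Walk (v p.1) (v q.1) | w.length = (p.2 : ℕ) + (q.2 : ℕ)}).1.length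
          = (p.2 : ℕ) + (q.2 : ℕ) := w.2
      have hd := hdistance p.1 q.1 hpq w.1
      have h3 : (p.2 : ℕ) < r p.1 := p.2.2
      have h4 : (q.2 : ℕ) < r q.1 := q.2.2
      omega
    rw [h2]
    norm_num
  have hZli : LinearIndependent ℝ Z := by
    rw [Fintype.linearIndependent_iff]
    intro c hc
    have hct : ∀ t, ∑ p, c p * Z p t = 0 := by
      intro t
      have h1 := congrFun hc t
      simpa [Finset.sum_apply, Pi.smul_apply, smul_eq_mul] using h1
    have claimA : ∀ q, ∑ p, c p * ∑ t, Z p t * Z q t = 0 := by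
      intro q
      have h1 : ∑ t, (∑ p, c p * Z p t) * Z q t = 0 := by
        rw [Finset.sum_congr rfl (fun t _ => by rw [hct t, zero_mul])]
        exact Finset.sum_const_zero
      calc ∑ p, c p * ∑ t, Z p t * Z q t
          = ∑ p, ∑ t, c p * (Z p t * Z q t) :=
            Finset.sum_congr rfl fun p _ => Finset.mul_sum _ _ _
      _ = ∑ t, ∑ p, c p * (Z p t * Z q t) := Finset.sum_comm
      _ = ∑ t, (∑ p, c p * Z p t) * Z q t := by
            refine Finset.sum_congr rfl fun t _ => ?_
            rw [Finset.sum_mul]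
            exact Finset.sum_congr rfl fun p _ => by ring
      _ = 0 := h1
    have claimB : ∀ q : (Σ i : Fin k, Fin (r i)),
        ∑ m : Fin (r q.1), c ⟨q.1, m⟩ * ∑ t, Z ⟨q.1, m⟩ t * Z q t = 0 := by
      intro q
      have h2 : ∑ i' : Fin k, ∑ m : Fin (r i'), (c ⟨i', m⟩ * ∑ t, Z ⟨i', m⟩ t * Z q t) = 0 := by
        rw [Finset.sum_sigma' Finset.univ (fun _ => Finset.univ)
          (fun i' m => c ⟨i', m⟩ * ∑ t, Z ⟨i', m⟩ t * Z q t), Finset.univ_sigma_univ]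
        exact claimA q
      rw [Finset.sum_eq_single q.1] at h2
      · exact h2
      · intro i _ hi
        refine Finset.sum_eq_zero fun m _ => ?_
        rw [hZorth ⟨i, m⟩ q hi, mul_zero]
      · intro h; exact absurd (Finset.mem_univ _) h
    rintro ⟨i, m⟩
    set F : Fin n → ℝ := fun t => ∑ m' : Fin (r i), c ⟨i, m'⟩ * Z ⟨i, m'⟩ t with hF
    have hFt : ∀ t, F t = ∑ m' : Fin (r i), c ⟨i, m'⟩ * Z ⟨i, m'⟩ t := fun t => rfl
    have hFZ : ∀ l : Fin (r i), ∑ t, F t * Z ⟨i, l⟩ t = 0 := by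
      intro l
      have h1 := claimB ⟨i, l⟩
      calc ∑ t, F t * Z ⟨i, l⟩ t
          = ∑ t, ∑ m', c ⟨i, m'⟩ * Z ⟨i, m'⟩ t * Z ⟨i, l⟩ t := by
            refine Finset.sum_congr rfl fun t _ => ?_
            rw [hFt t, Finset.sum_mul]
      _ = ∑ m', ∑ t, c ⟨i, m'⟩ * Z ⟨i, m'⟩ t * Z ⟨i, l⟩ t := Finset.sum_comm
      _ = ∑ m', c ⟨i, m'⟩ * ∑ t, Z ⟨i, m'⟩ t * Z ⟨i, l⟩ t := by
            refine Finset.sum_congr rfl fun m' _ => ?_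
            rw [Finset.mul_sum]
            exact Finset.sum_congr rfl fun t _ => by ring
      _ = 0 := h1
    have hF0 : ∀ t, F t = 0 := by
      apply sum_sq_zero
      calc ∑ t, F t * F t
          = ∑ t, ∑ m', c ⟨i, m'⟩ * (F t * Z ⟨i, m'⟩ t) := by
            refine Finset.sum_congr rfl fun t _ => ?_
            conv_lhs => rw [show F t * F t = F t * ∑ m' : Fin (r i), c ⟨i, m'⟩ * Z ⟨i, m'⟩ t from
              by rw [hFt t]]
            rw [Finset.mul_sum]
            exact Finset.sum_congr rfl fun m' _ => by ring
      _ = ∑ m', c ⟨i, m'⟩ * ∑ t, F t * Z ⟨i, m'⟩ t := by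
            rw [Finset.sum_comm]
            exact Finset.sum_congr rfl fun m' _ => (Finset.mul_sum _ _ _).symm
      _ = 0 := by
            refine Finset.sum_eq_zero fun m' _ => ?_
            rw [hFZ m', mul_zero]
    have hri : r i ≤ n :=
      le_trans (le_trans (Finset.single_le_sum (fun _ _ => Nat.zero_le _)
        (Finset.mem_univ i)) (le_of_eq hsum)) hsn
    have hpoly : ∀ t, (∑ m' : Fin (r i), c ⟨i, m'⟩ * lam t ^ (m' : ℕ)) = 0 := by
      intro t
      have h1 := hF0 t
      rw [hFt t] at h1
      have h2 : (∑ m' : Fin (r i), c ⟨i, m'⟩ * lam t ^ (m' : ℕ)) * U (v i) t = 0 := by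
        rw [Finset.sum_mul, ← h1]
        refine Finset.sum_congr rfl fun m' _ => ?_
        simp only [hZ]
        ring
      rcases mul_eq_zero.mp h2 with h | h
      · exact h
      · exact absurd h (hvU _ _)
    set c' : ℕ → ℝ := fun m' => if h : m' < r i then c ⟨i, ⟨m', h⟩⟩ else 0 with hc'
    have hvdm : ∀ t : Fin n, ∑ j : Fin n, (fun j : Fin n => c' (j : ℕ)) j * lam t ^ (j : ℕ) = 0 := by
      intro t
      show ∑ j : Fin n, c' (j : ℕ) * lam t ^ (j : ℕ) = 0
      rw [Fin.sum_univ_eq_sum_range (fun j => c' j * lam t ^ j) n]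
      rw [← Finset.sum_subset (Finset.range_subset_range.mpr hri) (fun x _ hx => ?_)]
      · rw [← Fin.sum_univ_eq_sum_range (fun j => c' j * lam t ^ j) (r i), ← hpoly t]
        refine Finset.sum_congr rfl fun m' _ => ?_
        simp only [hc']
        rw [dif_pos m'.2]
      · simp only [hc']
        rw [dif_neg (by simpa using hx), zero_mul]
    have hall := Matrix.eq_zero_of_forall_index_sum_mul_pow_eq_zero hdist hvdm
    have h2 := congrFun hall ⟨(m : ℕ), lt_of_lt_of_le m.2 hri⟩
    simp only [hc', Pi.zero_apply] at h2
    rw [dif_pos m.2] at h2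
    exact h2
  let Y : Matrix (Fin s) (Fin n) ℝ := Matrix.of fun a t => Z (e.symm a) t
  have hYli : LinearIndependent ℝ (fun a => Y a) := hZli.comp ⇑e.symm e.symm.injective
  obtain ⟨T₀, hT₀inj, hT₀unit⟩ := exists_unit_submatrix Y hYli
  let N : (Fin s → Fin n) → Matrix (Fin s) (Fin s) L := fun T => Matrix.of fun a b =>
    ∑ x : Fin s, lamL (T x) ^ (((e.symm a).2 : ℕ) + ((e.symm b).2 : ℕ))
      * muMat G lamL (T x) (v (e.symm a).1) (v (e.symm b).1)
  have hNι : ∀ T : Fin s → Fin n, (N T).map ι = (Y.submatrix id T) * (Y.submatrix id T)ᵀ := by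
    intro T
    ext a b
    simp only [N, Y, Matrix.map_apply, Matrix.mul_apply, Matrix.transpose_apply,
      Matrix.submatrix_apply, Matrix.of_apply, id]
    rw [map_sum]
    refine Finset.sum_congr rfl fun x _ => ?_
    rw [_root_.map_mul, _root_.map_pow, hι, mu_iota G lam U hdist hU hA lamL ι hι]
    simp only [hZ]
    rw [pow_add]; ring
  have hNdet : ∀ T, ι (N T).det = (Y.submatrix id T).det ^ 2 := by
    intro T
    rw [RingHom.map_det]
    rw [show ι.mapMatrix (N T) = (N T).map ι from rfl, hNι]
    rw [Matrix.det_mul, Matrix.det_transpose, sq]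
  have hNgal : ∀ (σ : Equiv.Perm (Fin n)) (g : L ≃ₐ[ℚ] L), (∀ i, g (lamL i) = lamL (σ i)) →
      ∀ T, g ((N T).det) = (N (σ ∘ T)).det := by
    intro σ g hg T
    rw [show g ((N T).det) = (((g : L ≃+* L) : L →+* L)) ((N T).det) from rfl, RingHom.map_det]
    congr 1
    ext a b
    show (((g : L ≃+* L) : L →+* L)) ((N T) a b) = N (σ ∘ T) a b
    simp only [N, Matrix.of_apply]
    rw [map_sum]
    refine Finset.sum_congr rfl fun x _ => ?_
    rw [_root_.map_mul, _root_.map_pow]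
    rw [show (((g : L ≃+* L) : L →+* L)) (lamL (T x)) = lamL (σ (T x)) from hg (T x)]
    rw [show (((g : L ≃+* L) : L →+* L)) (muMat G lamL (T x) (v (e.symm a).1) (v (e.symm b).1))
      = muMat G lamL (σ (T x)) (v (e.symm a).1) (v (e.symm b).1) from
        mu_gal G lamL σ g hg (T x) _ _]
    rfl
  have hNrange : ∀ T T' : Fin s → Fin n, Function.Injective T → Function.Injective T' →
      Finset.univ.image T = Finset.univ.image T' → N T = N T' := by
    intro T T' hT hT' him
    ext a b
    simp only [N, Matrix.of_apply]
    calc (∑ x : Fin s, lamL (T x) ^ (((e.symm a).2 : ℕ) + ((e.symm b).2 : ℕ))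
            * muMat G lamL (T x) (v (e.symm a).1) (v (e.symm b).1))
        = ∑ t ∈ Finset.univ.image T, lamL t ^ (((e.symm a).2 : ℕ) + ((e.symm b).2 : ℕ))
            * muMat G lamL t (v (e.symm a).1) (v (e.symm b).1) :=
          (Finset.sum_image (f := fun t => lamL t ^ (((e.symm a).2 : ℕ) + ((e.symm b).2 : ℕ))
            * muMat G lamL t (v (e.symm a).1) (v (e.symm b).1)) (fun x _ y _ h => hT h)).symm
    _ = ∑ t ∈ Finset.univ.image T', lamL t ^ (((e.symm a).2 : ℕ) + ((e.symm b).2 : ℕ))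
            * muMat G lamL t (v (e.symm a).1) (v (e.symm b).1) := by rw [him]
    _ = ∑ x : Fin s, lamL (T' x) ^ (((e.symm a).2 : ℕ) + ((e.symm b).2 : ℕ))
            * muMat G lamL (T' x) (v (e.symm a).1) (v (e.symm b).1) :=
          Finset.sum_image (f := fun t => lamL t ^ (((e.symm a).2 : ℕ) + ((e.symm b).2 : ℕ))
            * muMat G lamL t (v (e.symm a).1) (v (e.symm b).1)) (fun x _ y _ h => hT' h)
  have hdT₀ : (Y.submatrix id T₀).det ≠ 0 := by
    intro h
    rw [Matrix.isUnit_iff_isUnit_det, h] at hT₀unit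
    simp at hT₀unit
  have hNT₀ : (N T₀).det ≠ 0 := by
    intro h
    have h1 := hNdet T₀
    rw [h, map_zero] at h1
    exact hdT₀ ((pow_eq_zero_iff two_ne_zero).mp h1.symm)
  have hcards : (Finset.univ.image T₀).card = (Finset.univ.image S).card := by
    rw [Finset.card_image_of_injective _ hT₀inj, Finset.card_image_of_injective _ hS]
  have hbig : 2 ≤ (Finset.univ.image S).card ∨ (Finset.univ.image S).card + 2 ≤ n := by
    left
    rw [Finset.card_image_of_injective _ hS, Finset.card_univ, Fintype.card_fin]
    exact hs2
  obtain ⟨σ, hσalt, hσmem⟩ := exists_even_perm_image (Finset.univ.image T₀)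
    (Finset.univ.image S) hcards hbig
  obtain ⟨g, hg⟩ := hGal σ hσalt
  have hσT₀inj : Function.Injective (σ ∘ T₀) := σ.injective.comp hT₀inj
  have himeq : Finset.univ.image (σ ∘ T₀) = Finset.univ.image S := by
    ext t
    constructor
    · intro ht
      rw [Finset.mem_image] at ht
      obtain ⟨x, -, rfl⟩ := ht
      exact (hσmem (T₀ x)).mpr (Finset.mem_image_of_mem _ (Finset.mem_univ x))
    · intro ht
      have h1 : σ (σ.symm t) ∈ Finset.univ.image S := by rwa [σ.apply_symm_apply]
      have h2 : σ.symm t ∈ Finset.univ.image T₀ := (hσmem _).mp h1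
      rw [Finset.mem_image] at h2 ⊢
      obtain ⟨x, hx, hx2⟩ := h2
      exact ⟨x, hx, by rw [Function.comp_apply, hx2, σ.apply_symm_apply]⟩
  have hNS : (N S).det ≠ 0 := by
    rw [← hNrange (σ ∘ T₀) S hσT₀inj hS himeq, ← hNgal σ g hg T₀]
    intro h
    apply hNT₀
    have := g.injective (show g ((N T₀).det) = g 0 by rw [h, map_zero])
    exact this
  have hdS : (Y.submatrix id S).det ≠ 0 := by
    intro h
    apply hNS
    have h1 := hNdet S
    rw [h] at h1
    apply ι.injective
    rw [h1, map_zero]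
    norm_num
  have hMeq : M.submatrix (⇑e.symm) id = Y.submatrix id S := rfl
  rw [hMeq, Matrix.isUnit_iff_isUnit_det]
  exact isUnit_iff_ne_zero.mpr hdS
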